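/- Let n and m ≥ 0 be integers, β > 0 real, Z = β + iy with |y| ≤ β, and define H_m(e^{−Z}) := ∑_{r≥1} (−1)^{r+1} e^{−(3r²/2 + (m+1/2)r)Z} (e^{rZ/2} − e^{−rZ/2})². Then |H_m(e^{−Z})| ≤ 4 ∑_{r≥0} e^{−β r²/2}. -/

import Mathlib

open Complex

theorem Hm_bound (m : ℕ) (β y : ℝ) (hβ : 0 < β) (hy : |y| ≤ β) :
    ‖∑' k : ℕ, (-1 : ℂ) ^ k *
        Complex.exp (-(3 * ((k : ℂ) + 1) ^ 2 / 2 + ((m : ℂ) + 1 / 2) * ((k : ℂ) + 1)) *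
          ((β : ℂ) + Complex.I * (y : ℂ))) *
        (Complex.exp (((k : ℂ) + 1) * ((β : ℂ) + Complex.I * (y : ℂ)) / 2) -
          Complex.exp (-(((k : ℂ) + 1) * ((β : ℂ) + Complex.I * (y : ℂ))) / 2)) ^ 2‖ ≤
      4 * ∑' r : ℕ, Real.exp (-β * (r : ℝ) ^ 2 / 2) := by
  set Z : ℂ := (β : ℂ) + Complex.I * (y : ℂ) with hZ
  set f : ℕ → ℂ := fun k => (-1 : ℂ) ^ k *
        Complex.exp (-(3 * ((k : ℂ) + 1) ^ 2 / 2 + ((m : ℂ) + 1 / 2) * ((k : ℂ) + 1)) * Z) *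
        (Complex.exp (((k : ℂ) + 1) * Z / 2) -
          Complex.exp (-(((k : ℂ) + 1) * Z) / 2)) ^ 2 with hf
  -- norm of exp of real multiple of Z
  have hre : ∀ c : ℝ, ((c : ℂ) * Z).re = c * β := by
    intro c
    simp [hZ, Complex.mul_re]
  have key : ∀ k : ℕ, ‖f k‖ ≤ 4 * Real.exp (-β * ((k : ℝ) + 1) ^ 2 / 2) := by
    intro k
    set r : ℝ := (k : ℝ) + 1 with hr
    have hr1 : (1 : ℝ) ≤ r := by simp [hr]
    set c : ℝ := 3 * r ^ 2 / 2 + ((m : ℝ) + 1 / 2) * r with hc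
    have e1 : (-(3 * ((k : ℂ) + 1) ^ 2 / 2 + ((m : ℂ) + 1 / 2) * ((k : ℂ) + 1)) * Z)
        = ((-c : ℝ) : ℂ) * Z := by push_cast [hc, hr]; ring
    have e2 : (((k : ℂ) + 1) * Z / 2) = ((r / 2 : ℝ) : ℂ) * Z := by push_cast [hr]; ring
    have e3 : (-(((k : ℂ) + 1) * Z) / 2) = ((-(r / 2) : ℝ) : ℂ) * Z := by push_cast [hr]; ring
    have n1 : ‖Complex.exp (((-c : ℝ) : ℂ) * Z)‖ = Real.exp (-c * β) := by
      rw [Complex.norm_exp, hre]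
    have n2 : ‖Complex.exp (((r / 2 : ℝ) : ℂ) * Z)‖ = Real.exp (r / 2 * β) := by
      rw [Complex.norm_exp, hre]
    have n3 : ‖Complex.exp (((-(r / 2) : ℝ) : ℂ) * Z)‖ = Real.exp (-(r / 2) * β) := by
      rw [Complex.norm_exp, hre]
    have hnorm : ‖f k‖ = Real.exp (-c * β) *
        ‖Complex.exp (((r / 2 : ℝ) : ℂ) * Z) - Complex.exp (((-(r / 2) : ℝ) : ℂ) * Z)‖ ^ 2 := by
      rw [hf]
      simp only [e1, e2, e3]
      rw [norm_mul, norm_mul, norm_pow, norm_pow, n1]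
      simp
    rw [hnorm]
    have hdiff : ‖Complex.exp (((r / 2 : ℝ) : ℂ) * Z) - Complex.exp (((-(r / 2) : ℝ) : ℂ) * Z)‖
        ≤ 2 * Real.exp (r / 2 * β) := by
      refine (norm_sub_le _ _).trans ?_
      rw [n2, n3]
      have : Real.exp (-(r / 2) * β) ≤ Real.exp (r / 2 * β) := by
        apply Real.exp_le_exp.2; nlinarith
      linarith
    have hsq : ‖Complex.exp (((r / 2 : ℝ) : ℂ) * Z) - Complex.exp (((-(r / 2) : ℝ) : ℂ) * Z)‖ ^ 2
        ≤ 4 * Real.exp (r / 2 * β) ^ 2 := by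
      nlinarith [norm_nonneg (Complex.exp (((r / 2 : ℝ) : ℂ) * Z) - Complex.exp (((-(r / 2) : ℝ) : ℂ) * Z))]
    calc Real.exp (-c * β) * ‖Complex.exp (((r / 2 : ℝ) : ℂ) * Z) - Complex.exp (((-(r / 2) : ℝ) : ℂ) * Z)‖ ^ 2
        ≤ Real.exp (-c * β) * (4 * Real.exp (r / 2 * β) ^ 2) := by
          exact mul_le_mul_of_nonneg_left hsq (Real.exp_pos _).le
      _ = 4 * Real.exp ((-c + r) * β) := by
          rw [show (-c + r) * β = -c * β + (r / 2 * β + r / 2 * β) by ring,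
            Real.exp_add, Real.exp_add, pow_two]
          ring
      _ ≤ 4 * Real.exp (-β * r ^ 2 / 2) := by
          have : (-c + r) * β ≤ -β * r ^ 2 / 2 := by
            rw [hc]
            have hm : (0 : ℝ) ≤ (m : ℝ) := Nat.cast_nonneg m
            nlinarith [mul_nonneg hβ.le (mul_nonneg hm (by linarith : (0:ℝ) ≤ r)),
              mul_nonneg hβ.le (mul_nonneg (by linarith : (0:ℝ) ≤ r) (by linarith : (0:ℝ) ≤ r - 1/2))]
          have := Real.exp_le_exp.2 this
          linarith
  -- summability of the majorant
  have hgeo : Summable (fun r : ℕ => Real.exp (-β / 2) ^ r) :=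
    summable_geometric_of_lt_one (Real.exp_pos _).le
      (Real.exp_lt_one_iff.2 (by linarith))
  have hgsum : Summable (fun r : ℕ => Real.exp (-β * (r : ℝ) ^ 2 / 2)) := by
    apply Summable.of_nonneg_of_le (fun r => (Real.exp_pos _).le) _ hgeo
    intro r
    rw [← Real.exp_nat_mul]
    apply Real.exp_le_exp.2
    have h1 : (r : ℝ) ≤ (r : ℝ) ^ 2 := by exact_mod_cast Nat.le_self_pow two_ne_zero r
    nlinarith [mul_le_mul_of_nonneg_left h1 hβ.le]
  have hgsum' : Summable (fun k : ℕ => 4 * Real.exp (-β * ((k : ℝ) + 1) ^ 2 / 2)) := by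
    have h := hgsum.comp_injective (add_left_injective 1)
    exact (h.congr (fun k => by simp only [Function.comp]; push_cast; ring_nf)).mul_left 4
  have hfs : Summable fun k => ‖f k‖ :=
    Summable.of_nonneg_of_le (fun k => norm_nonneg _) key hgsum'
  calc ‖∑' k, f k‖ ≤ ∑' k, ‖f k‖ := norm_tsum_le_tsum_norm hfs
    _ ≤ ∑' k : ℕ, 4 * Real.exp (-β * ((k : ℝ) + 1) ^ 2 / 2) := Summable.tsum_le_tsum key hfs hgsum'
    _ = 4 * ∑' k : ℕ, Real.exp (-β * ((k : ℝ) + 1) ^ 2 / 2) := tsum_mul_left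
    _ ≤ 4 * ∑' r : ℕ, Real.exp (-β * (r : ℝ) ^ 2 / 2) := by
        have hshift : (∑' k : ℕ, Real.exp (-β * ((k : ℝ) + 1) ^ 2 / 2))
            = ∑' k : ℕ, Real.exp (-β * (((k + 1 : ℕ)) : ℝ) ^ 2 / 2) :=
          tsum_congr fun k => by push_cast; ring_nf
        rw [hshift]
        have h0 := Summable.tsum_eq_zero_add hgsum
        have hpos : (0 : ℝ) ≤ Real.exp (-β * ((0:ℕ) : ℝ) ^ 2 / 2) := (Real.exp_pos _).le
        linarith
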